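/- Let 0 < α < 1, a₁,b₁ > 0, c₂ > 0, and let φ : (0,1) → ℝ be measurable with ∫₀¹ φ dx = 1, φ(x) ≤ 2c₂·x^{−α}, and |φ(x)−φ(y)| ≤ 2c₂·ε·(a₁·x^{−1−α} + b₁·x^{−α}) whenever |x−y| ≤ ε. Let A_ε φ(x) = (1/(2ε))·∫_{x−ε}^{x+ε} φ(y) dy (computed on the circle ℝ/ℤ). Then there is a constant k₁ = 18·c₂·max{a₁,b₁,1}/(α(1−α)) such that ‖φ − A_ε φ‖_{L¹} ≤ k₁·ε^{1−α}. -/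

import Mathlib

open Set MeasureTheory intervalIntegral
open scoped Interval

-- g facts
private lemma g_anti {α a₁ b₁ : ℝ} (hα : 0 < α) (ha₁ : 0 < a₁) (hb₁ : 0 < b₁)
    {s t : ℝ} (hs : 0 < s) (hst : s ≤ t) :
    a₁ * t ^ (-1 - α) + b₁ * t ^ (-α) ≤ a₁ * s ^ (-1 - α) + b₁ * s ^ (-α) := by
  have h1 : t ^ (-1 - α) ≤ s ^ (-1 - α) :=
    Real.rpow_le_rpow_of_nonpos hs hst (by linarith)
  have h2 : t ^ (-α) ≤ s ^ (-α) :=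
    Real.rpow_le_rpow_of_nonpos hs hst (by linarith)
  nlinarith

private lemma g_nonneg {α a₁ b₁ : ℝ} (ha₁ : 0 < a₁) (hb₁ : 0 < b₁)
    {t : ℝ} (ht : 0 ≤ t) : 0 ≤ a₁ * t ^ (-1 - α) + b₁ * t ^ (-α) := by
  have := Real.rpow_nonneg ht (-1 - α)
  have := Real.rpow_nonneg ht (-α)
  nlinarith

private lemma g_contOn {α a₁ b₁ : ℝ} {s t : ℝ} (hs : 0 < s) :
    ContinuousOn (fun u : ℝ => a₁ * u ^ (-1 - α) + b₁ * u ^ (-α)) (Icc s t) := by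
  intro x hx
  have hx0 : x ≠ 0 := (lt_of_lt_of_le hs hx.1).ne'
  exact ((continuousWithinAt_const.mul
      (Real.continuousAt_rpow_const x _ (Or.inl hx0)).continuousWithinAt).add
    (continuousWithinAt_const.mul
      (Real.continuousAt_rpow_const x _ (Or.inl hx0)).continuousWithinAt))

private lemma g_intble {α a₁ b₁ : ℝ} {s t : ℝ} (hs : 0 < s) (hst : s ≤ t) :
    IntervalIntegrable (fun u : ℝ => a₁ * u ^ (-1 - α) + b₁ * u ^ (-α)) volume s t := by
  apply ContinuousOn.intervalIntegrable
  rw [uIcc_of_le hst]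
  exact g_contOn hs

private lemma rpow_subadd {x y p : ℝ} (hx : 0 ≤ x) (hy : 0 ≤ y) (hp0 : 0 ≤ p) (hp1 : p ≤ 1) :
    (x + y) ^ p ≤ x ^ p + y ^ p := by
  have h := NNReal.rpow_add_le_add_rpow x.toNNReal y.toNNReal hp0 hp1
  rw [← NNReal.coe_le_coe] at h
  push_cast at h
  rwa [Real.coe_toNNReal x hx, Real.coe_toNNReal y hy] at h

private lemma Fint_eq {α a₁ b₁ : ℝ} (hα : 0 < α) (hα1 : α < 1) {s t : ℝ}
    (hs : 0 < s) (hst : s ≤ t) :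
    ∫ u in s..t, (a₁ * u ^ (-1 - α) + b₁ * u ^ (-α)) =
      a₁ * ((s ^ (-α) - t ^ (-α)) / α) + b₁ * ((t ^ (1 - α) - s ^ (1 - α)) / (1 - α)) := by
  have h0 : (0:ℝ) ∉ [[s, t]] := by
    rw [uIcc_of_le hst]; intro h; exact absurd h.1 (by linarith)
  have i1 : IntervalIntegrable (fun u : ℝ => u ^ (-1 - α)) volume s t :=
    intervalIntegrable_rpow (Or.inr h0)
  have i2 : IntervalIntegrable (fun u : ℝ => u ^ (-α)) volume s t :=
    intervalIntegrable_rpow' (by linarith)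
  rw [intervalIntegral.integral_add (i1.const_mul a₁) (i2.const_mul b₁),
    intervalIntegral.integral_const_mul, intervalIntegral.integral_const_mul,
    integral_rpow (Or.inr ⟨by intro h; linarith, h0⟩),
    integral_rpow (Or.inl (by linarith))]
  have e1 : -1 - α + 1 = -α := by ring
  have e2 : -α + 1 = 1 - α := by ring
  rw [e1, e2]
  rw [div_neg, ← neg_div, neg_sub]

private lemma Fint_nonneg {α a₁ b₁ : ℝ} (hα : 0 < α) (hα1 : α < 1)
    (ha₁ : 0 < a₁) (hb₁ : 0 < b₁) {s t : ℝ} (hs : 0 < s) (hst : s ≤ t) :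
    0 ≤ ∫ u in s..t, (a₁ * u ^ (-1 - α) + b₁ * u ^ (-α)) := by
  rw [Fint_eq hα hα1 hs hst]
  have ht : 0 < t := lt_of_lt_of_le hs hst
  have h1 : t ^ (-α) ≤ s ^ (-α) := Real.rpow_le_rpow_of_nonpos hs hst (by linarith)
  have h2 : s ^ (1 - α) ≤ t ^ (1 - α) := Real.rpow_le_rpow hs.le hst (by linarith)
  have h3 : (0:ℝ) ≤ 1 - α := by linarith
  exact add_nonneg (mul_nonneg ha₁.le (div_nonneg (by linarith) hα.le))
    (mul_nonneg hb₁.le (div_nonneg (by linarith) h3))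

private lemma Fint_le_one {α a₁ b₁ : ℝ} (hα : 0 < α) (hα1 : α < 1)
    (ha₁ : 0 < a₁) (hb₁ : 0 < b₁) {s t : ℝ} (hs : 0 < s) (hst : s ≤ t) (ht1 : t ≤ 1) :
    (∫ u in s..t, (a₁ * u ^ (-1 - α) + b₁ * u ^ (-α)))
      ≤ a₁ / α * s ^ (-α) + b₁ / (1 - α) := by
  rw [Fint_eq hα hα1 hs hst]
  have ht : 0 < t := lt_of_lt_of_le hs hst
  have h1 : 0 ≤ t ^ (-α) := Real.rpow_nonneg ht.le _
  have h2 : t ^ (1 - α) ≤ 1 := Real.rpow_le_one ht.le ht1 (by linarith)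
  have h3 : 0 ≤ s ^ (1 - α) := Real.rpow_nonneg hs.le _
  have h4 : 0 ≤ s ^ (-α) := Real.rpow_nonneg hs.le _
  have h5 : (0:ℝ) < 1 - α := by linarith
  have k1 : a₁ * ((s ^ (-α) - t ^ (-α)) / α) ≤ a₁ / α * s ^ (-α) := by
    have h6 : a₁ * (s ^ (-α) - t ^ (-α)) ≤ a₁ * s ^ (-α) := by nlinarith
    calc a₁ * ((s ^ (-α) - t ^ (-α)) / α) = a₁ * (s ^ (-α) - t ^ (-α)) / α := by ring
      _ ≤ a₁ * s ^ (-α) / α := (div_le_div_iff_of_pos_right hα).mpr h6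
      _ = a₁ / α * s ^ (-α) := by ring
  have k2 : b₁ * ((t ^ (1 - α) - s ^ (1 - α)) / (1 - α)) ≤ b₁ / (1 - α) := by
    have h6 : b₁ * (t ^ (1 - α) - s ^ (1 - α)) ≤ b₁ * 1 := by nlinarith
    calc b₁ * ((t ^ (1 - α) - s ^ (1 - α)) / (1 - α))
        = b₁ * (t ^ (1 - α) - s ^ (1 - α)) / (1 - α) := by ring
      _ ≤ b₁ * 1 / (1 - α) := (div_le_div_iff_of_pos_right h5).mpr h6
      _ = b₁ / (1 - α) := by ring
  linarith

private lemma Fint_step {α a₁ b₁ ε : ℝ} (hα : 0 < α) (hα1 : α < 1)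
    (ha₁ : 0 < a₁) (hb₁ : 0 < b₁) (hε : 0 < ε) {s : ℝ} (hs : 0 < s) :
    ε * (a₁ * (s + ε) ^ (-1 - α) + b₁ * (s + ε) ^ (-α))
      ≤ ∫ u in s..(s + ε), (a₁ * u ^ (-1 - α) + b₁ * u ^ (-α)) := by
  have hle : s ≤ s + ε := by linarith
  have h := intervalIntegral.integral_mono_on hle
    (intervalIntegrable_const (c :=
      a₁ * (s + ε) ^ (-1 - α) + b₁ * (s + ε) ^ (-α)))
    (g_intble hs hle)
    (fun u hu => g_anti hα ha₁ hb₁ (lt_of_lt_of_le hs hu.1) hu.2)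
  rwa [intervalIntegral.integral_const, add_sub_cancel_left, smul_eq_mul] at h

private lemma Fint_small {α a₁ b₁ ε : ℝ} (hα : 0 < α) (hα1 : α < 1)
    (ha₁ : 0 < a₁) (hb₁ : 0 < b₁) (hε : 0 < ε) {s : ℝ} (hs : 0 < s) :
    (∫ u in s..(s + ε), (a₁ * u ^ (-1 - α) + b₁ * u ^ (-α)))
      ≤ a₁ / α * s ^ (-α) + b₁ / (1 - α) * ε ^ (1 - α) := by
  have hle : s ≤ s + ε := by linarith
  rw [Fint_eq hα hα1 hs hle]
  have h5 : (0:ℝ) < 1 - α := by linarith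
  have h1 : 0 ≤ (s + ε) ^ (-α) := Real.rpow_nonneg (by linarith) _
  have hsub : (s + ε) ^ (1 - α) ≤ s ^ (1 - α) + ε ^ (1 - α) :=
    rpow_subadd hs.le hε.le (by linarith) (by linarith)
  have k1 : a₁ * ((s ^ (-α) - (s + ε) ^ (-α)) / α) ≤ a₁ / α * s ^ (-α) := by
    have h6 : a₁ * (s ^ (-α) - (s + ε) ^ (-α)) ≤ a₁ * s ^ (-α) := by nlinarith
    calc a₁ * ((s ^ (-α) - (s + ε) ^ (-α)) / α)
        = a₁ * (s ^ (-α) - (s + ε) ^ (-α)) / α := by ring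
      _ ≤ a₁ * s ^ (-α) / α := (div_le_div_iff_of_pos_right hα).mpr h6
      _ = a₁ / α * s ^ (-α) := by ring
  have k2 : b₁ * (((s + ε) ^ (1 - α) - s ^ (1 - α)) / (1 - α))
      ≤ b₁ / (1 - α) * ε ^ (1 - α) := by
    have h6 : b₁ * ((s + ε) ^ (1 - α) - s ^ (1 - α)) ≤ b₁ * ε ^ (1 - α) := by nlinarith
    calc b₁ * (((s + ε) ^ (1 - α) - s ^ (1 - α)) / (1 - α))
        = b₁ * ((s + ε) ^ (1 - α) - s ^ (1 - α)) / (1 - α) := by ring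
      _ ≤ b₁ * ε ^ (1 - α) / (1 - α) := (div_le_div_iff_of_pos_right h5).mpr h6
      _ = b₁ / (1 - α) * ε ^ (1 - α) := by ring
  linarith

private lemma chain_bound {α a₁ b₁ c₂ ε : ℝ} {φ : ℝ → ℝ}
    (hα : 0 < α) (hα1 : α < 1) (ha₁ : 0 < a₁) (hb₁ : 0 < b₁) (hc₂ : 0 < c₂) (hε : 0 < ε)
    (hosc : ∀ x ∈ Ioo (0:ℝ) 1, ∀ y : ℝ, |x - y| ≤ ε →
      |φ x - φ y| ≤ 2 * c₂ * ε * (a₁ * x ^ (-1 - α) + b₁ * x ^ (-α)))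
    {x y : ℝ} (hx : 0 < x) (hxy : x + ε ≤ y) (hy : y < 1) :
    |φ x - φ y| ≤ 2 * c₂ * ((∫ u in x..y, (a₁ * u ^ (-1 - α) + b₁ * u ^ (-α)))
      + ε * (a₁ * (x + ε) ^ (-1 - α) + b₁ * (x + ε) ^ (-α))) := by
  obtain ⟨n, hn⟩ := exists_nat_ge ((y - x) / ε)
  have hn' : y - x ≤ n * ε := by
    rw [div_le_iff₀ hε] at hn; linarith
  clear hn
  induction n generalizing x with
  | zero => simp at hn'; linarith
  | succ n ih =>
    set z := x + ε with hz
    have hz0 : 0 < z := by positivity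
    have hz1 : z < 1 := by linarith
    have hzmem : z ∈ Ioo (0:ℝ) 1 := ⟨hz0, hz1⟩
    have hstep : |φ x - φ z| ≤ 2 * c₂ * ε * (a₁ * z ^ (-1 - α) + b₁ * z ^ (-α)) := by
      have := hosc z hzmem x (by rw [abs_of_nonneg (by linarith : (0:ℝ) ≤ z - x)]; linarith)
      rwa [abs_sub_comm] at this
    have hFstep : ε * (a₁ * z ^ (-1 - α) + b₁ * z ^ (-α))
        ≤ ∫ u in x..z, (a₁ * u ^ (-1 - α) + b₁ * u ^ (-α)) := Fint_step hα hα1 ha₁ hb₁ hε hx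
    by_cases hcase : y ≤ x + 2 * ε
    · -- at most two steps
      have hstep2 : |φ z - φ y| ≤ 2 * c₂ * ε * (a₁ * z ^ (-1 - α) + b₁ * z ^ (-α)) :=
        hosc z hzmem y (by rw [abs_of_nonpos (by linarith : z - y ≤ 0)]; simp; linarith)
      have hsplit : (∫ u in x..z, (a₁ * u ^ (-1 - α) + b₁ * u ^ (-α)))
          + (∫ u in z..y, (a₁ * u ^ (-1 - α) + b₁ * u ^ (-α)))
          = ∫ u in x..y, (a₁ * u ^ (-1 - α) + b₁ * u ^ (-α)) :=
        intervalIntegral.integral_add_adjacent_intervals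
          (g_intble hx (by linarith)) (g_intble hz0 (by linarith))
      have hF2 : 0 ≤ ∫ u in z..y, (a₁ * u ^ (-1 - α) + b₁ * u ^ (-α)) :=
        Fint_nonneg hα hα1 ha₁ hb₁ hz0 (by linarith)
      calc |φ x - φ y| ≤ |φ x - φ z| + |φ z - φ y| := by
            have := abs_sub_abs_le_abs_sub (φ x - φ z) (φ y - φ z)
            calc |φ x - φ y| = |(φ x - φ z) - (φ y - φ z)| := by ring_nf
              _ ≤ |φ x - φ z| + |φ y - φ z| := abs_sub _ _
              _ = |φ x - φ z| + |φ z - φ y| := by rw [abs_sub_comm (φ y)]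
        _ ≤ 2 * c₂ * ε * (a₁ * z ^ (-1 - α) + b₁ * z ^ (-α))
              + 2 * c₂ * ε * (a₁ * z ^ (-1 - α) + b₁ * z ^ (-α)) := by linarith
        _ ≤ 2 * c₂ * ((∫ u in x..y, (a₁ * u ^ (-1 - α) + b₁ * u ^ (-α)))
              + ε * (a₁ * z ^ (-1 - α) + b₁ * z ^ (-α))) := by
            have h9 : 2 * c₂ * (ε * (a₁ * z ^ (-1 - α) + b₁ * z ^ (-α)))
                ≤ 2 * c₂ * ∫ u in x..z, (a₁ * u ^ (-1 - α) + b₁ * u ^ (-α)) :=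
              mul_le_mul_of_nonneg_left hFstep (by positivity)
            have h10 : 0 ≤ 2 * c₂ * ∫ u in z..y, (a₁ * u ^ (-1 - α) + b₁ * u ^ (-α)) :=
              mul_nonneg (by positivity) hF2
            have hsplit2 : 2 * c₂ * ((∫ u in x..z, (a₁ * u ^ (-1 - α) + b₁ * u ^ (-α)))
                + (∫ u in z..y, (a₁ * u ^ (-1 - α) + b₁ * u ^ (-α))))
                = 2 * c₂ * ∫ u in x..y, (a₁ * u ^ (-1 - α) + b₁ * u ^ (-α)) := by rw [hsplit]
            linarith
    · push_neg at hcase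
      have hih : |φ z - φ y| ≤ 2 * c₂ * ((∫ u in z..y, (a₁ * u ^ (-1 - α) + b₁ * u ^ (-α)))
          + ε * (a₁ * (z + ε) ^ (-1 - α) + b₁ * (z + ε) ^ (-α))) :=
        ih hz0 (by linarith) (by push_cast at hn' ⊢; linarith)
      have hsplit : (∫ u in x..z, (a₁ * u ^ (-1 - α) + b₁ * u ^ (-α)))
          + (∫ u in z..y, (a₁ * u ^ (-1 - α) + b₁ * u ^ (-α)))
          = ∫ u in x..y, (a₁ * u ^ (-1 - α) + b₁ * u ^ (-α)) :=
        intervalIntegral.integral_add_adjacent_intervals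
          (g_intble hx (by linarith)) (g_intble hz0 (by linarith))
      have hanti : a₁ * (z + ε) ^ (-1 - α) + b₁ * (z + ε) ^ (-α)
          ≤ a₁ * z ^ (-1 - α) + b₁ * z ^ (-α) := g_anti hα ha₁ hb₁ hz0 (by linarith)
      calc |φ x - φ y| = |(φ x - φ z) + (φ z - φ y)| := by ring_nf
        _ ≤ |φ x - φ z| + |φ z - φ y| := abs_add_le _ _
        _ ≤ 2 * c₂ * ((∫ u in x..y, (a₁ * u ^ (-1 - α) + b₁ * u ^ (-α)))
              + ε * (a₁ * z ^ (-1 - α) + b₁ * z ^ (-α))) := by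
            have h8 : ε * (a₁ * (z + ε) ^ (-1 - α) + b₁ * (z + ε) ^ (-α))
                ≤ ∫ u in x..z, (a₁ * u ^ (-1 - α) + b₁ * u ^ (-α)) :=
              le_trans (mul_le_mul_of_nonneg_left hanti hε.le) hFstep
            have h9 : 2 * c₂ * (ε * (a₁ * (z + ε) ^ (-1 - α) + b₁ * (z + ε) ^ (-α)))
                ≤ 2 * c₂ * ∫ u in x..z, (a₁ * u ^ (-1 - α) + b₁ * u ^ (-α)) :=
              mul_le_mul_of_nonneg_left h8 (by positivity)
            have hsplit2 : 2 * c₂ * ((∫ u in x..z, (a₁ * u ^ (-1 - α) + b₁ * u ^ (-α)))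
                + (∫ u in z..y, (a₁ * u ^ (-1 - α) + b₁ * u ^ (-α))))
                = 2 * c₂ * ∫ u in x..y, (a₁ * u ^ (-1 - α) + b₁ * u ^ (-α)) := by rw [hsplit]
            linarith

private lemma rpow_exp_le {x p c : ℝ} (hx0 : 0 < x) (hx1 : x ≤ 1) (hpc : c ≤ p) :
    x ^ p ≤ x ^ c := Real.rpow_le_rpow_of_exponent_ge hx0 hx1 hpc

private lemma rpow_34_1 {α : ℝ} (hα : 0 < α) (hα1 : α < 1) : ((3:ℝ)/4) ^ (-α) ≤ 2 := by
  have h := rpow_exp_le (by norm_num : (0:ℝ) < 3/4) (by norm_num) (by linarith : -(1:ℝ) ≤ -α)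
  rw [Real.rpow_neg_one] at h
  calc ((3:ℝ)/4) ^ (-α) ≤ ((3:ℝ)/4)⁻¹ := h
    _ ≤ 2 := by norm_num

private lemma rpow_34_2 {α : ℝ} (hα : 0 < α) (hα1 : α < 1) : ((3:ℝ)/4) ^ (-1-α) ≤ 2 := by
  have h := rpow_exp_le (by norm_num : (0:ℝ) < 3/4) (by norm_num) (by linarith : (-2:ℝ) ≤ -1-α)
  have e : ((3:ℝ)/4) ^ ((-2):ℝ) = 16/9 := by
    rw [show ((-2):ℝ) = ((-2:ℤ):ℝ) by norm_num, Real.rpow_intCast]; norm_num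
  rw [e] at h; linarith

private lemma rpow_14_1 {α : ℝ} (hα : 0 < α) (hα1 : α < 1) : ((1:ℝ)/4) ^ (-α) ≤ 4 := by
  have h := rpow_exp_le (by norm_num : (0:ℝ) < 1/4) (by norm_num) (by linarith : -(1:ℝ) ≤ -α)
  rw [Real.rpow_neg_one] at h
  calc ((1:ℝ)/4) ^ (-α) ≤ ((1:ℝ)/4)⁻¹ := h
    _ ≤ 4 := by norm_num

private lemma rpow_14_2 {α : ℝ} (hα : 0 < α) (hα1 : α < 1) : ((1:ℝ)/4) ^ (-1-α) ≤ 16 := by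
  have h := rpow_exp_le (by norm_num : (0:ℝ) < 1/4) (by norm_num) (by linarith : (-2:ℝ) ≤ -1-α)
  have e : ((1:ℝ)/4) ^ ((-2):ℝ) = 16 := by
    rw [show ((-2):ℝ) = ((-2:ℤ):ℝ) by norm_num, Real.rpow_intCast]; norm_num
  rw [e] at h; linarith

set_option maxHeartbeats 2000000 in
theorem averaging_operator_estimate
    (α a₁ b₁ c₂ ε : ℝ) (hα : 0 < α) (hα1 : α < 1)
    (ha₁ : 0 < a₁) (hb₁ : 0 < b₁) (hc₂ : 0 < c₂)
    (hε : 0 < ε) (hε1 : ε < 1 / 2)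
    (φ : ℝ → ℝ) (hper : ∀ x, φ (x + 1) = φ x)
    (hmeas : Measurable φ)
    (hnorm : ∫ x in Ioo (0:ℝ) 1, φ x = 1)
    (hupper : ∀ x ∈ Ioo (0:ℝ) 1, φ x ≤ 2 * c₂ * x ^ (-α))
    (hosc : ∀ x ∈ Ioo (0:ℝ) 1, ∀ y : ℝ, |x - y| ≤ ε →
      |φ x - φ y| ≤ 2 * c₂ * ε * (a₁ * x ^ (-1 - α) + b₁ * x ^ (-α))) :
    (∫ x in Ioo (0:ℝ) 1,
        |φ x - (1 / (2 * ε)) * ∫ y in Ioo (x - ε) (x + ε), φ y|)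
      ≤ (18 * c₂ * max (max a₁ b₁) 1 / (α * (1 - α))) * ε ^ (1 - α) := by
  have h1α : (0:ℝ) < 1 - α := by linarith
  set M := max (max a₁ b₁) 1 with hMdef
  have hMa : a₁ ≤ M := le_trans (le_max_left _ _) (le_max_left _ _)
  have hMb : b₁ ≤ M := le_trans (le_max_right _ _) (le_max_left _ _)
  have hM1 : (1:ℝ) ≤ M := le_max_right _ _
  have hM0 : (0:ℝ) < M := lt_of_lt_of_le one_pos hM1
  have hE0 : (0:ℝ) < ε ^ (1 - α) := Real.rpow_pos_of_pos hε _
  have hRHS0 : 0 ≤ 18 * c₂ * M / (α * (1 - α)) * ε ^ (1 - α) :=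
    mul_nonneg (div_nonneg (by positivity) (by positivity)) hE0.le
  by_cases hInt : IntegrableOn
      (fun x => |φ x - 1 / (2 * ε) * ∫ y in Ioo (x - ε) (x + ε), φ y|) (Ioo (0:ℝ) 1) volume
  swap
  · rw [integral_undef hInt]; exact hRHS0
  -- majorant for |φ| on (0,1)
  have hgε0 : 0 ≤ a₁ * ε ^ (-1 - α) + b₁ * ε ^ (-α) := g_nonneg ha₁ hb₁ hε.le
  have hmaj : ∀ x ∈ Ioo (0:ℝ) 1, |φ x| ≤
      (|φ (3/4)| + 2 * c₂ * (2 * (a₁/α) + b₁/(1-α)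
        + ε * (a₁ * ε ^ (-1 - α) + b₁ * ε ^ (-α)) + 16*a₁ + 4*b₁))
      + (2 * c₂ * (a₁/α)) * x ^ (-α) := by
    intro x hx
    obtain ⟨hxpos, hx1⟩ := hx
    have hxα : 0 < x ^ (-α) := Real.rpow_pos_of_pos hxpos _
    have htri : |φ x| ≤ |φ (3/4)| + |φ x - φ (3/4)| := by
      have h := abs_sub_abs_le_abs_sub (φ x) (φ (3/4))
      linarith
    have haux : (0:ℝ) ≤ 2 * c₂ * (a₁/α) * x ^ (-α) := by positivity
    rcases le_or_gt (x + ε) (3/4) with hc1 | hc1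
    · have hch := chain_bound hα hα1 ha₁ hb₁ hc₂ hε hosc hxpos hc1 (by norm_num)
      have hF := Fint_le_one hα hα1 ha₁ hb₁ hxpos (by linarith : x ≤ 3/4) (by norm_num)
      have hganti : a₁ * (x+ε) ^ (-1-α) + b₁ * (x+ε) ^ (-α)
          ≤ a₁ * ε ^ (-1 - α) + b₁ * ε ^ (-α) := g_anti hα ha₁ hb₁ hε (by linarith)
      have h2 : |φ x - φ (3/4)| ≤ 2*c₂*((a₁/α * x ^ (-α) + b₁/(1-α))
          + ε * (a₁ * ε ^ (-1 - α) + b₁ * ε ^ (-α))) := by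
        refine le_trans hch (mul_le_mul_of_nonneg_left ?_ (by positivity))
        have h3 := mul_le_mul_of_nonneg_left hganti hε.le
        linarith
      have p1 : (0:ℝ) ≤ 2*c₂*(2*(a₁/α)) := by positivity
      have p2 : (0:ℝ) ≤ 2*c₂*(16*a₁+4*b₁) := by positivity
      have h2' : 2*c₂*((a₁/α * x ^ (-α) + b₁/(1-α))
          + ε * (a₁ * ε ^ (-1 - α) + b₁ * ε ^ (-α)))
          = (2 * c₂ * (a₁/α)) * x ^ (-α)
            + 2*c₂*(b₁/(1-α) + ε * (a₁ * ε ^ (-1 - α) + b₁ * ε ^ (-α))) := by ring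
      have pK : 2*c₂*(2 * (a₁/α) + b₁/(1-α)
            + ε * (a₁ * ε ^ (-1 - α) + b₁ * ε ^ (-α)) + 16*a₁ + 4*b₁)
          = 2*c₂*(2*(a₁/α)) + 2*c₂*(b₁/(1-α) + ε * (a₁ * ε ^ (-1 - α) + b₁ * ε ^ (-α)))
            + 2*c₂*(16*a₁+4*b₁) := by ring
      rw [h2'] at h2
      linarith
    rcases le_or_gt (3/4 + ε) x with hc2 | hc2
    · have hch := chain_bound hα hα1 ha₁ hb₁ hc₂ hε hosc (by norm_num : (0:ℝ) < 3/4) hc2 hx1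
      rw [abs_sub_comm] at hch
      have hF := Fint_le_one hα hα1 ha₁ hb₁ (by norm_num : (0:ℝ) < 3/4) (by linarith) hx1.le
      have hganti : a₁ * (3/4+ε) ^ (-1-α) + b₁ * (3/4+ε) ^ (-α)
          ≤ a₁ * ((3:ℝ)/4) ^ (-1-α) + b₁ * ((3:ℝ)/4) ^ (-α) :=
        g_anti hα ha₁ hb₁ (by norm_num) (by linarith)
      have h34a := rpow_34_1 hα hα1
      have h34b := rpow_34_2 hα hα1
      have h34c : (0:ℝ) < ((3:ℝ)/4) ^ (-α) := Real.rpow_pos_of_pos (by norm_num) _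
      have h2 : |φ x - φ (3/4)| ≤ 2*c₂*((a₁/α * 2 + b₁/(1-α)) + (a₁ + b₁)) := by
        refine le_trans hch (mul_le_mul_of_nonneg_left ?_ (by positivity))
        have h3 : ε * (a₁ * (3/4+ε) ^ (-1-α) + b₁ * (3/4+ε) ^ (-α)) ≤ a₁ + b₁ := by
          have h4 : ε * (a₁ * (3/4+ε) ^ (-1-α) + b₁ * (3/4+ε) ^ (-α))
              ≤ ε * (a₁ * 2 + b₁ * 2) := by
            apply mul_le_mul_of_nonneg_left _ hε.le
            nlinarith
          nlinarith [mul_nonneg (by linarith : (0:ℝ) ≤ 1/2 - ε)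
            (by linarith : (0:ℝ) ≤ 2*a₁ + 2*b₁)]
        have h5 : a₁/α * ((3:ℝ)/4) ^ (-α) ≤ a₁/α * 2 :=
          mul_le_mul_of_nonneg_left h34a (by positivity)
        linarith
      have h6 : (0:ℝ) ≤ 2*c₂*(ε * (a₁ * ε ^ (-1 - α) + b₁ * ε ^ (-α))) := by
        have := mul_nonneg hε.le hgε0; positivity
      have p2 : (0:ℝ) ≤ 2*c₂*(15*a₁ + 3*b₁) := by positivity
      have pK : 2*c₂*(2 * (a₁/α) + b₁/(1-α)
            + ε * (a₁ * ε ^ (-1 - α) + b₁ * ε ^ (-α)) + 16*a₁ + 4*b₁)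
          = 2*c₂*((a₁/α * 2 + b₁/(1-α)) + (a₁ + b₁))
            + 2*c₂*(ε * (a₁ * ε ^ (-1 - α) + b₁ * ε ^ (-α))) + 2*c₂*(15*a₁+3*b₁) := by ring
      linarith
    · have hx14 : (1:ℝ)/4 ≤ x := by linarith
      have hoscx := hosc x ⟨hxpos, hx1⟩ (3/4) (abs_le.mpr ⟨by linarith, by linarith⟩)
      have hganti : a₁ * x ^ (-1-α) + b₁ * x ^ (-α)
          ≤ a₁ * ((1:ℝ)/4) ^ (-1-α) + b₁ * ((1:ℝ)/4) ^ (-α) :=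
        g_anti hα ha₁ hb₁ (by norm_num) hx14
      have h14a := rpow_14_1 hα hα1
      have h14b := rpow_14_2 hα hα1
      have h2 : |φ x - φ (3/4)| ≤ 2*c₂*(ε*(16*a₁ + 4*b₁)) := by
        refine le_trans hoscx ?_
        have h3 : ε * (a₁ * x ^ (-1 - α) + b₁ * x ^ (-α)) ≤ ε*(16*a₁ + 4*b₁) := by
          apply mul_le_mul_of_nonneg_left _ hε.le
          linarith [mul_le_mul_of_nonneg_left h14a hb₁.le,
            mul_le_mul_of_nonneg_left h14b ha₁.le]
        calc 2 * c₂ * ε * (a₁ * x ^ (-1 - α) + b₁ * x ^ (-α))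
            = 2*c₂*(ε * (a₁ * x ^ (-1 - α) + b₁ * x ^ (-α))) := by ring
          _ ≤ 2*c₂*(ε*(16*a₁ + 4*b₁)) := mul_le_mul_of_nonneg_left h3 (by positivity)
      have h7 : 2*c₂*(ε*(16*a₁ + 4*b₁)) ≤ 2*c₂*(16*a₁ + 4*b₁) := by
        apply mul_le_mul_of_nonneg_left _ (by positivity : (0:ℝ) ≤ 2*c₂)
        nlinarith
      have h6 : (0:ℝ) ≤ 2*c₂*(ε * (a₁ * ε ^ (-1 - α) + b₁ * ε ^ (-α))) := by
        have := mul_nonneg hε.le hgε0; positivity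
      have p1 : (0:ℝ) ≤ 2*c₂*(2*(a₁/α)) := by positivity
      have p3 : (0:ℝ) ≤ 2*c₂*(b₁/(1-α)) := by positivity
      have pK : 2*c₂*(2 * (a₁/α) + b₁/(1-α)
            + ε * (a₁ * ε ^ (-1 - α) + b₁ * ε ^ (-α)) + 16*a₁ + 4*b₁)
          = 2*c₂*(2*(a₁/α)) + 2*c₂*(b₁/(1-α))
            + 2*c₂*(ε * (a₁ * ε ^ (-1 - α) + b₁ * ε ^ (-α))) + 2*c₂*(16*a₁+4*b₁) := by ring
      linarith
  -- integrability of φ over a period and over (-1, 2]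
  have hφIoc : IntegrableOn φ (Ioc (-1:ℝ) 2) volume := by
    have hrpow_int : IntegrableOn (fun x : ℝ => x ^ (-α)) (Ioc (0:ℝ) 1) volume := by
      have h := intervalIntegral.intervalIntegrable_rpow' (a := 0) (b := 1)
        (by linarith : (-1:ℝ) < -α)
      rwa [intervalIntegrable_iff_integrableOn_Ioc_of_le (by norm_num)] at h
    have hmajint : IntegrableOn (fun x : ℝ =>
        (|φ (3/4)| + 2 * c₂ * (2 * (a₁/α) + b₁/(1-α)
          + ε * (a₁ * ε ^ (-1 - α) + b₁ * ε ^ (-α)) + 16*a₁ + 4*b₁))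
        + (2 * c₂ * (a₁/α)) * x ^ (-α)) (Ioc (0:ℝ) 1) volume := by
      exact (integrableOn_const measure_Ioc_lt_top.ne).add
        (hrpow_int.const_mul _)
    have hφ01Ioc : IntegrableOn φ (Ioc (0:ℝ) 1) volume := by
      apply Integrable.mono' hmajint hmeas.aestronglyMeasurable.restrict
      rw [ae_restrict_iff' measurableSet_Ioc]
      have h1 : ∀ᵐ (x:ℝ) ∂volume, x ∉ ({1} : Set ℝ) :=
        measure_eq_zero_iff_ae_notMem.mp (measure_singleton (1:ℝ))
      filter_upwards [h1] with x hx1 hx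
      have hx1' : x ≠ 1 := by simpa using hx1
      have hmem : x ∈ Ioo (0:ℝ) 1 := ⟨hx.1, lt_of_le_of_ne hx.2 hx1'⟩
      simpa [Real.norm_eq_abs] using hmaj x hmem
    have hφ01 : IntervalIntegrable φ volume 0 1 :=
      (intervalIntegrable_iff_integrableOn_Ioc_of_le (by norm_num)).mpr hφ01Ioc
    have hper' : (fun x : ℝ => φ (x + 1)) = φ := funext hper
    have i1 : IntervalIntegrable φ volume (-1) 0 := by
      have h := hφ01.comp_add_right 1
      rw [hper'] at h
      norm_num at h
      exact h
    have i2 : IntervalIntegrable φ volume 1 2 := by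
      have h := hφ01.comp_add_right (-1)
      have e : (fun x : ℝ => φ (x + -1)) = φ := by
        funext x
        rw [← hper (x + -1)]
        norm_num
      rw [e] at h
      norm_num at h
      exact h
    have itot : IntervalIntegrable φ volume (-1) 2 := (i1.trans hφ01).trans i2
    exact (intervalIntegrable_iff_integrableOn_Ioc_of_le (by norm_num)).mp itot
  -- pointwise estimate valid on all of (0,1)
  have hRII : ∀ x ∈ Ioo (0:ℝ) 1,
      |φ x - 1 / (2 * ε) * ∫ y in Ioo (x - ε) (x + ε), φ y|
        ≤ 2 * c₂ * ε * (a₁ * x ^ (-1 - α) + b₁ * x ^ (-α)) := by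
    intro x hx
    have hsub : Ioo (x - ε) (x + ε) ⊆ Ioc (-1:ℝ) 2 := fun y hy =>
      ⟨by have := hx.1; have := hy.1; simp only [mem_Ioo] at *; linarith,
       by have := hx.2; have := hy.2; simp only [mem_Ioo] at *; linarith⟩
    have hloc : IntegrableOn φ (Ioo (x - ε) (x + ε)) volume := hφIoc.mono_set hsub
    have hvol : (volume (Ioo (x - ε) (x + ε))).toReal = 2 * ε := by
      rw [Real.volume_Ioo]
      rw [ENNReal.toReal_ofReal (by linarith : (0:ℝ) ≤ x + ε - (x - ε))]
      ring
    have hconst : IntegrableOn (fun _ : ℝ => φ x) (Ioo (x - ε) (x + ε)) volume :=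
      integrableOn_const measure_Ioo_lt_top.ne
    have hkey : φ x - 1 / (2 * ε) * ∫ y in Ioo (x - ε) (x + ε), φ y
        = 1 / (2 * ε) * ∫ y in Ioo (x - ε) (x + ε), (φ x - φ y) := by
      rw [integral_sub hconst hloc, setIntegral_const, measureReal_def, hvol, smul_eq_mul]
      field_simp
    rw [hkey, abs_mul, abs_of_nonneg (by positivity : (0:ℝ) ≤ 1 / (2*ε))]
    have habs : |∫ y in Ioo (x - ε) (x + ε), (φ x - φ y)|
        ≤ ∫ y in Ioo (x - ε) (x + ε), |φ x - φ y| := by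
      simpa [Real.norm_eq_abs] using
        norm_integral_le_integral_norm (μ := volume.restrict (Ioo (x - ε) (x + ε)))
          (fun y => φ x - φ y)
    have hmono : (∫ y in Ioo (x - ε) (x + ε), |φ x - φ y|)
        ≤ ∫ _y in Ioo (x - ε) (x + ε),
            (2 * c₂ * ε * (a₁ * x ^ (-1 - α) + b₁ * x ^ (-α))) := by
      apply setIntegral_mono_on ((hconst.sub hloc).abs)
        (integrableOn_const measure_Ioo_lt_top.ne) measurableSet_Ioo
      intro y hy
      exact hosc x hx y (abs_le.mpr ⟨by linarith [hy.2], by linarith [hy.1]⟩)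
    rw [setIntegral_const, measureReal_def, hvol, smul_eq_mul] at hmono
    have hfin := mul_le_mul_of_nonneg_left (le_trans habs hmono)
      (by positivity : (0:ℝ) ≤ 1 / (2*ε))
    calc 1 / (2*ε) * |∫ y in Ioo (x - ε) (x + ε), (φ x - φ y)|
        ≤ 1 / (2*ε) * (2 * ε * (2 * c₂ * ε * (a₁ * x ^ (-1 - α) + b₁ * x ^ (-α)))) := hfin
      _ = 2 * c₂ * ε * (a₁ * x ^ (-1 - α) + b₁ * x ^ (-α)) := by
          field_simp
  -- pointwise estimate on (0, ε)
  have hRI : ∀ x ∈ Ioo (0:ℝ) ε,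
      |φ x - 1 / (2 * ε) * ∫ y in Ioo (x - ε) (x + ε), φ y|
        ≤ c₂ * (2 * (a₁/α) + a₁) * x ^ (-α)
          + c₂ * (a₁ * ε ^ (-α) + b₁/(1-α) + 2 * b₁ * ε ^ (1-α) + b₁/(1-α) * ε ^ (1-α)) := by
    intro x hx
    obtain ⟨hxpos, hxε⟩ := hx
    have hx01 : x ∈ Ioo (0:ℝ) 1 := ⟨hxpos, by linarith⟩
    have hxα : 0 < x ^ (-α) := Real.rpow_pos_of_pos hxpos _
    have hsub : Ioo (x - ε) (x + ε) ⊆ Ioc (-1:ℝ) 2 := fun y hy =>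
      ⟨by have := hy.1; simp only [mem_Ioo] at *; linarith,
       by have := hy.2; simp only [mem_Ioo] at *; linarith⟩
    have hloc : IntegrableOn φ (Ioo (x - ε) (x + ε)) volume := hφIoc.mono_set hsub
    have hvol : (volume (Ioo (x - ε) (x + ε))).toReal = 2 * ε := by
      rw [Real.volume_Ioo]
      rw [ENNReal.toReal_ofReal (by linarith : (0:ℝ) ≤ x + ε - (x - ε))]
      ring
    have hconst : IntegrableOn (fun _ : ℝ => φ x) (Ioo (x - ε) (x + ε)) volume :=
      integrableOn_const measure_Ioo_lt_top.ne
    have hkey : φ x - 1 / (2 * ε) * ∫ y in Ioo (x - ε) (x + ε), φ y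
        = 1 / (2 * ε) * ∫ y in Ioo (x - ε) (x + ε), (φ x - φ y) := by
      rw [integral_sub hconst hloc, setIntegral_const, measureReal_def, hvol, smul_eq_mul]
      field_simp
    rw [hkey, abs_mul, abs_of_nonneg (by positivity : (0:ℝ) ≤ 1 / (2*ε))]
    have habs : |∫ y in Ioo (x - ε) (x + ε), (φ x - φ y)|
        ≤ ∫ y in Ioo (x - ε) (x + ε), |φ x - φ y| := by
      simpa [Real.norm_eq_abs] using
        norm_integral_le_integral_norm (μ := volume.restrict (Ioo (x - ε) (x + ε)))
          (fun y => φ x - φ y)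
    have hint : IntegrableOn (fun y => |φ x - φ y|) (Ioo (x - ε) (x + ε)) volume :=
      (hconst.sub hloc).abs
    -- decompose the domain
    have hu1 : Ioc (x-ε) x ∪ Ioo x (x+ε) = Ioo (x-ε) (x+ε) :=
      Set.Ioc_union_Ioo_eq_Ioo (by linarith) (by linarith)
    have hu2 : Ioc (x-ε) 0 ∪ Ioc 0 x = Ioc (x-ε) x :=
      Set.Ioc_union_Ioc_eq_Ioc (by linarith) (by linarith)
    have hsubA : Ioc (x-ε) x ⊆ Ioo (x-ε) (x+ε) := fun y hy =>
      ⟨hy.1, lt_of_le_of_lt hy.2 (by linarith)⟩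
    have hsubB : Ioo x (x+ε) ⊆ Ioo (x-ε) (x+ε) := fun y hy =>
      ⟨by have := hy.1; linarith, hy.2⟩
    have hsubC : Ioc (x-ε) 0 ⊆ Ioc (x-ε) x := fun y hy => ⟨hy.1, le_trans hy.2 hxpos.le⟩
    have hsubD : Ioc (0:ℝ) x ⊆ Ioc (x-ε) x := fun y hy => ⟨by have := hy.1; linarith, hy.2⟩
    have hiA : IntegrableOn (fun y => |φ x - φ y|) (Ioc (x-ε) x) volume :=
      hint.mono_set hsubA
    have hiB : IntegrableOn (fun y => |φ x - φ y|) (Ioo x (x+ε)) volume :=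
      hint.mono_set hsubB
    have hiC : IntegrableOn (fun y => |φ x - φ y|) (Ioc (x-ε) 0) volume :=
      hiA.mono_set hsubC
    have hiD : IntegrableOn (fun y => |φ x - φ y|) (Ioc (0:ℝ) x) volume :=
      hiA.mono_set hsubD
    have hd1 : Disjoint (Ioc (x-ε) x) (Ioo x (x+ε)) := by
      rw [Set.disjoint_left]
      rintro y ⟨_, h1⟩ ⟨h2, _⟩
      exact absurd (lt_of_le_of_lt h1 h2) (lt_irrefl y)
    have hd2 : Disjoint (Ioc (x-ε) 0) (Ioc (0:ℝ) x) := by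
      rw [Set.disjoint_left]
      rintro y ⟨_, h1⟩ ⟨h2, _⟩
      linarith
    have e1 : ∫ y in Ioo (x-ε) (x+ε), |φ x - φ y|
        = (∫ y in Ioc (x-ε) x, |φ x - φ y|) + ∫ y in Ioo x (x+ε), |φ x - φ y| := by
      rw [← hu1, setIntegral_union hd1 measurableSet_Ioo hiA hiB]
    have e2 : ∫ y in Ioc (x-ε) x, |φ x - φ y|
        = (∫ y in Ioc (x-ε) 0, |φ x - φ y|) + ∫ y in Ioc 0 x, |φ x - φ y| := by
      rw [← hu2, setIntegral_union hd2 measurableSet_Ioc hiC hiD]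
    -- piece 1 : y ∈ (x-ε, 0)
    have hB₁0 : (0:ℝ) ≤ 2*c₂*(a₁/α * x^(-α) + b₁/(1-α)
        + ε*(a₁*ε^(-1-α)+b₁*ε^(-α))) := by
      have := mul_nonneg hε.le hgε0
      positivity
    have p1 : ∫ y in Ioc (x-ε) 0, |φ x - φ y|
        ≤ ε * (2*c₂*(a₁/α * x^(-α) + b₁/(1-α) + ε*(a₁*ε^(-1-α)+b₁*ε^(-α)))) := by
      rw [setIntegral_congr_set Ioo_ae_eq_Ioc.symm]
      have hm : ∫ y in Ioo (x-ε) 0, |φ x - φ y|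
          ≤ ∫ _y in Ioo (x-ε) 0, (2*c₂*(a₁/α * x^(-α) + b₁/(1-α)
            + ε*(a₁*ε^(-1-α)+b₁*ε^(-α)))) := by
        apply setIntegral_mono_on (hiC.mono_set Ioo_subset_Ioc_self)
          (integrableOn_const measure_Ioo_lt_top.ne) measurableSet_Ioo
        intro y hy
        obtain ⟨hy1, hy2⟩ := hy
        rw [← hper y]
        have hch := chain_bound hα hα1 ha₁ hb₁ hc₂ hε hosc hxpos
          (by linarith : x + ε ≤ y + 1) (by linarith : y + 1 < 1)
        refine le_trans hch (mul_le_mul_of_nonneg_left ?_ (by positivity))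
        have hF := Fint_le_one hα hα1 ha₁ hb₁ hxpos (by linarith : x ≤ y + 1)
          (by linarith : y + 1 ≤ 1)
        have hganti : a₁ * (x+ε) ^ (-1-α) + b₁ * (x+ε) ^ (-α)
            ≤ a₁ * ε ^ (-1 - α) + b₁ * ε ^ (-α) := g_anti hα ha₁ hb₁ hε (by linarith)
        have h3 := mul_le_mul_of_nonneg_left hganti hε.le
        linarith
      rw [setIntegral_const, measureReal_def, Real.volume_Ioo, smul_eq_mul,
        ENNReal.toReal_ofReal (by linarith : (0:ℝ) ≤ 0 - (x - ε))] at hm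
      refine le_trans hm ?_
      apply mul_le_mul_of_nonneg_right (by linarith) hB₁0
    -- piece 2 : y ∈ (0, x]
    have p2 : ∫ y in Ioc (0:ℝ) x, |φ x - φ y|
        ≤ x * (2 * c₂ * ε * (a₁ * x ^ (-1 - α) + b₁ * x ^ (-α))) := by
      have hm : ∫ y in Ioc (0:ℝ) x, |φ x - φ y|
          ≤ ∫ _y in Ioc (0:ℝ) x, (2 * c₂ * ε * (a₁ * x ^ (-1 - α) + b₁ * x ^ (-α))) := by
        apply setIntegral_mono_on hiD
          (integrableOn_const measure_Ioc_lt_top.ne) measurableSet_Ioc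
        intro y hy
        obtain ⟨hy1, hy2⟩ := hy
        exact hosc x hx01 y (abs_le.mpr ⟨by linarith, by linarith⟩)
      rw [setIntegral_const, measureReal_def, Real.volume_Ioc, smul_eq_mul,
        ENNReal.toReal_ofReal (by linarith : (0:ℝ) ≤ x - 0)] at hm
      simpa using hm
    -- piece 3 : y ∈ (x, x+ε)
    have hgint : IntegrableOn (fun y : ℝ => a₁ * y ^ (-1-α) + b₁ * y ^ (-α))
        (Ioc x (x+ε)) volume := by
      have := g_intble (α := α) (a₁ := a₁) (b₁ := b₁) hxpos (by linarith : x ≤ x + ε)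
      rwa [intervalIntegrable_iff_integrableOn_Ioc_of_le (by linarith)] at this
    have p3 : ∫ y in Ioo x (x+ε), |φ x - φ y|
        ≤ 2 * c₂ * ε * (a₁/α * x^(-α) + b₁/(1-α) * ε^(1-α)) := by
      have hm : ∫ y in Ioo x (x+ε), |φ x - φ y|
          ≤ ∫ y in Ioo x (x+ε), (2 * c₂ * ε) * (a₁ * y ^ (-1-α) + b₁ * y ^ (-α)) := by
        apply setIntegral_mono_on hiB
          ((hgint.mono_set Ioo_subset_Ioc_self).const_mul _) measurableSet_Ioo
        intro y hy
        obtain ⟨hy1, hy2⟩ := hy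
        have hy01 : y ∈ Ioo (0:ℝ) 1 := ⟨by linarith, by linarith⟩
        have h := hosc y hy01 x (abs_le.mpr ⟨by linarith, by linarith⟩)
        rw [abs_sub_comm] at h
        calc |φ x - φ y| ≤ 2 * c₂ * ε * (a₁ * y ^ (-1 - α) + b₁ * y ^ (-α)) := h
          _ = (2 * c₂ * ε) * (a₁ * y ^ (-1-α) + b₁ * y ^ (-α)) := by ring_nf
      refine le_trans hm ?_
      rw [setIntegral_congr_set Ioo_ae_eq_Ioc,
        ← intervalIntegral.integral_of_le (by linarith : x ≤ x + ε),
        intervalIntegral.integral_const_mul]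
      have hFs := Fint_small hα hα1 ha₁ hb₁ hε hxpos
      calc (2 * c₂ * ε) * ∫ u in x..(x+ε), (a₁ * u ^ (-1-α) + b₁ * u ^ (-α))
          ≤ (2 * c₂ * ε) * (a₁/α * x^(-α) + b₁/(1-α) * ε^(1-α)) :=
            mul_le_mul_of_nonneg_left hFs (by positivity)
        _ = 2 * c₂ * ε * (a₁/α * x^(-α) + b₁/(1-α) * ε^(1-α)) := by ring
    -- combine
    have hS : ∫ y in Ioo (x-ε) (x+ε), |φ x - φ y|
        ≤ ε * (2*c₂*(a₁/α * x^(-α) + b₁/(1-α) + ε*(a₁*ε^(-1-α)+b₁*ε^(-α))))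
          + x * (2 * c₂ * ε * (a₁ * x ^ (-1 - α) + b₁ * x ^ (-α)))
          + 2 * c₂ * ε * (a₁/α * x^(-α) + b₁/(1-α) * ε^(1-α)) := by
      rw [e1, e2]
      linarith
    have hfin := mul_le_mul_of_nonneg_left (le_trans habs hS)
      (by positivity : (0:ℝ) ≤ 1 / (2*ε))
    refine le_trans hfin ?_
    have idA : ε * ε ^ (-1-α) = ε ^ (-α) := by
      rw [show (-α) = 1 + (-1-α) by ring, Real.rpow_add hε, Real.rpow_one]
    have idB : x * x ^ (-1-α) = x ^ (-α) := by
      rw [show (-α) = 1 + (-1-α) by ring, Real.rpow_add hxpos, Real.rpow_one]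
    have idC : x * x ^ (-α) = x ^ (1-α) := by
      rw [show (1-α) = 1 + (-α) by ring, Real.rpow_add hxpos, Real.rpow_one]
    have hxb : x ^ (1-α) ≤ ε ^ (1-α) := Real.rpow_le_rpow hxpos.le hxε.le (by linarith)
    have hexp : 1 / (2*ε) * (ε * (2*c₂*(a₁/α * x^(-α) + b₁/(1-α)
          + ε*(a₁*ε^(-1-α)+b₁*ε^(-α))))
          + x * (2 * c₂ * ε * (a₁ * x ^ (-1 - α) + b₁ * x ^ (-α)))
          + 2 * c₂ * ε * (a₁/α * x^(-α) + b₁/(1-α) * ε^(1-α)))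
        = c₂*(a₁/α * x^(-α) + b₁/(1-α) + a₁*(ε * ε^(-1-α)) + b₁*(ε * ε^(-α)))
          + c₂*(a₁ * (x * x^(-1-α)) + b₁ * (x * x^(-α)))
          + c₂*(a₁/α * x^(-α) + b₁/(1-α) * ε^(1-α)) := by
      field_simp
      ring
    rw [hexp, idA, idB, idC]
    have idD : ε * ε ^ (-α) = ε ^ (1-α) := by
      rw [show (1-α) = 1 + (-α) by ring, Real.rpow_add hε, Real.rpow_one]
    rw [idD]
    have hlast : c₂ * (b₁ * x ^ (1-α)) ≤ c₂ * (b₁ * ε ^ (1-α)) := by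
      apply mul_le_mul_of_nonneg_left _ hc₂.le
      exact mul_le_mul_of_nonneg_left hxb hb₁.le
    nlinarith [hlast]
  -- split the integral
  have hαne : α ≠ 0 := hα.ne'
  have h1αne : (1:ℝ) - α ≠ 0 := h1α.ne'
  have hεE : ε ≤ ε ^ (1-α) := by
    have h := rpow_exp_le hε (by linarith : ε ≤ 1) (by linarith : 1 - α ≤ 1)
    rwa [Real.rpow_one] at h
  have hεE2 : ε * ε ^ (1-α) ≤ ε ^ (1-α) := by
    nlinarith
  have idD : ε * ε ^ (-α) = ε ^ (1-α) := by
    rw [show (1-α) = 1 + (-α) by ring, Real.rpow_add hε, Real.rpow_one]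
  have hd : Disjoint (Ioo (0:ℝ) ε) (Ico ε 1) := by
    rw [Set.disjoint_left]
    rintro y ⟨_, h1⟩ ⟨h2, _⟩
    linarith
  have hi1 : IntegrableOn
      (fun x => |φ x - 1 / (2 * ε) * ∫ y in Ioo (x - ε) (x + ε), φ y|)
      (Ioo (0:ℝ) ε) volume :=
    hInt.mono_set (fun y hy => ⟨hy.1, by have := hy.2; simp only [mem_Ioo] at *; linarith⟩)
  have hi2 : IntegrableOn
      (fun x => |φ x - 1 / (2 * ε) * ∫ y in Ioo (x - ε) (x + ε), φ y|)
      (Ico ε 1) volume :=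
    hInt.mono_set (fun y hy => ⟨by have := hy.1; simp only [mem_Ico] at *; linarith, hy.2⟩)
  have hsplitset : Ioo (0:ℝ) 1 = Ioo 0 ε ∪ Ico ε 1 :=
    (Set.Ioo_union_Ico_eq_Ioo hε (by linarith)).symm
  rw [hsplitset, setIntegral_union hd measurableSet_Ico hi1 hi2]
  -- region I integral bound
  have hrpow_intε : IntegrableOn (fun x : ℝ => x ^ (-α)) (Ioo (0:ℝ) ε) volume := by
    have h := intervalIntegral.intervalIntegrable_rpow' (a := 0) (b := ε)
      (by linarith : (-1:ℝ) < -α)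
    rw [intervalIntegrable_iff_integrableOn_Ioc_of_le hε.le] at h
    exact h.mono_set Ioo_subset_Ioc_self
  have hIa : (∫ x in Ioo (0:ℝ) ε, |φ x - 1 / (2 * ε) * ∫ y in Ioo (x - ε) (x + ε), φ y|)
      ≤ ∫ x in Ioo (0:ℝ) ε, (c₂ * (2 * (a₁/α) + a₁) * x ^ (-α)
        + c₂ * (a₁ * ε ^ (-α) + b₁/(1-α) + 2 * b₁ * ε ^ (1-α) + b₁/(1-α) * ε ^ (1-α))) := by
    apply setIntegral_mono_on hi1
      ((hrpow_intε.const_mul _).add (integrableOn_const measure_Ioo_lt_top.ne))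
      measurableSet_Ioo
    intro x hx
    exact hRI x hx
  have hIcalc : ∫ x in Ioo (0:ℝ) ε, (c₂ * (2 * (a₁/α) + a₁) * x ^ (-α)
      + c₂ * (a₁ * ε ^ (-α) + b₁/(1-α) + 2 * b₁ * ε ^ (1-α) + b₁/(1-α) * ε ^ (1-α)))
      = c₂ * (2 * (a₁/α) + a₁) * (ε ^ (1-α)/(1-α))
        + ε * (c₂ * (a₁ * ε ^ (-α) + b₁/(1-α) + 2 * b₁ * ε ^ (1-α)
          + b₁/(1-α) * ε ^ (1-α))) := by
    rw [setIntegral_congr_set Ioo_ae_eq_Ioc, ← intervalIntegral.integral_of_le hε.le]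
    have irint : IntervalIntegrable (fun x : ℝ => x ^ (-α)) volume 0 ε :=
      intervalIntegral.intervalIntegrable_rpow' (by linarith)
    rw [intervalIntegral.integral_add (irint.const_mul _)
      intervalIntegrable_const]
    rw [intervalIntegral.integral_const_mul, integral_rpow (Or.inl (by linarith)),
      intervalIntegral.integral_const]
    rw [Real.zero_rpow (by intro h; linarith : -α + 1 ≠ 0)]
    rw [smul_eq_mul, show -α + 1 = 1 - α by ring]
    ring
  -- region II integral bound
  have hgint1 : IntegrableOn (fun y : ℝ => a₁ * y ^ (-1-α) + b₁ * y ^ (-α))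
      (Ioo ε 1) volume := by
    have h := g_intble (α := α) (a₁ := a₁) (b₁ := b₁) hε (by linarith : ε ≤ 1)
    rw [intervalIntegrable_iff_integrableOn_Ioc_of_le (by linarith)] at h
    exact h.mono_set Ioo_subset_Ioc_self
  have hIb : (∫ x in Ico ε 1, |φ x - 1 / (2 * ε) * ∫ y in Ioo (x - ε) (x + ε), φ y|)
      ≤ 2 * c₂ * ε * (a₁/α * ε ^ (-α) + b₁/(1-α)) := by
    rw [setIntegral_congr_set Ioo_ae_eq_Ico.symm]
    have hm : (∫ x in Ioo ε 1, |φ x - 1 / (2 * ε) * ∫ y in Ioo (x - ε) (x + ε), φ y|)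
        ≤ ∫ x in Ioo ε 1, (2 * c₂ * ε) * (a₁ * x ^ (-1-α) + b₁ * x ^ (-α)) := by
      apply setIntegral_mono_on
        (hInt.mono_set (fun y hy => ⟨by have := hy.1; simp only [mem_Ioo] at *; linarith, hy.2⟩))
        (hgint1.const_mul _) measurableSet_Ioo
      intro x hx
      have h := hRII x ⟨by have := hx.1; linarith, hx.2⟩
      calc |φ x - 1 / (2 * ε) * ∫ y in Ioo (x - ε) (x + ε), φ y|
          ≤ 2 * c₂ * ε * (a₁ * x ^ (-1 - α) + b₁ * x ^ (-α)) := h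
        _ = (2 * c₂ * ε) * (a₁ * x ^ (-1-α) + b₁ * x ^ (-α)) := by ring_nf
    refine le_trans hm ?_
    rw [setIntegral_congr_set Ioo_ae_eq_Ioc,
      ← intervalIntegral.integral_of_le (by linarith : ε ≤ 1),
      intervalIntegral.integral_const_mul]
    have hF := Fint_le_one hα hα1 ha₁ hb₁ hε (by linarith : ε ≤ 1) le_rfl
    calc (2 * c₂ * ε) * ∫ u in ε..1, (a₁ * u ^ (-1-α) + b₁ * u ^ (-α))
        ≤ (2 * c₂ * ε) * (a₁/α * ε ^ (-α) + b₁/(1-α)) :=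
          mul_le_mul_of_nonneg_left hF (by positivity)
      _ = 2 * c₂ * ε * (a₁/α * ε ^ (-α) + b₁/(1-α)) := by ring
  -- final numeric estimate
  have hcoef : ((2*(a₁/α) + a₁)/(1-α) + (a₁ + b₁/(1-α) + 2*b₁ + b₁/(1-α))
      + (2*(a₁/α) + 2*(b₁/(1-α)))) ≤ 18*M/(α*(1-α)) := by
    rw [le_div_iff₀ (mul_pos hα h1α)]
    have e : ((2*(a₁/α) + a₁)/(1-α) + (a₁ + b₁/(1-α) + 2*b₁ + b₁/(1-α))
        + (2*(a₁/α) + 2*(b₁/(1-α)))) * (α*(1-α))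
        = 2*a₁ + a₁*α + a₁*α*(1-α) + 4*b₁*α + 2*b₁*α*(1-α) + 2*a₁*(1-α) := by
      field_simp
      ring
    rw [e]
    nlinarith [mul_nonneg (sub_nonneg.mpr hMa) (mul_nonneg hα.le h1α.le),
      mul_nonneg (sub_nonneg.mpr hMb) (mul_nonneg hα.le h1α.le),
      mul_nonneg (sub_nonneg.mpr hMa) hα.le, mul_nonneg (sub_nonneg.mpr hMb) hα.le,
      mul_nonneg (sub_nonneg.mpr hMa) h1α.le, mul_nonneg (sub_nonneg.mpr hMb) h1α.le,
      mul_nonneg hM0.le (sq_nonneg α), mul_nonneg hM0.le (sq_nonneg (1-α)),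
      mul_nonneg ha₁.le (sq_nonneg α), mul_nonneg hb₁.le (sq_nonneg α), hM1, hM0,
      mul_pos hα h1α]
  have key : c₂ * (2 * (a₁/α) + a₁) * (ε ^ (1-α)/(1-α))
      + ε * (c₂ * (a₁ * ε ^ (-α) + b₁/(1-α) + 2 * b₁ * ε ^ (1-α) + b₁/(1-α) * ε ^ (1-α)))
      + 2 * c₂ * ε * (a₁/α * ε ^ (-α) + b₁/(1-α))
      ≤ 18 * c₂ * M / (α * (1 - α)) * ε ^ (1-α) := by
    have q0 : (0:ℝ) ≤ c₂ * (b₁/(1-α)) := by positivity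
    have q1 : c₂ * (b₁/(1-α)) * ε ≤ c₂ * (b₁/(1-α)) * ε ^ (1-α) :=
      mul_le_mul_of_nonneg_left hεE q0
    have q2 : c₂ * (2*b₁) * (ε * ε ^ (1-α)) ≤ c₂ * (2*b₁) * ε ^ (1-α) :=
      mul_le_mul_of_nonneg_left hεE2 (by positivity)
    have q3 : c₂ * (b₁/(1-α)) * (ε * ε ^ (1-α)) ≤ c₂ * (b₁/(1-α)) * ε ^ (1-α) :=
      mul_le_mul_of_nonneg_left hεE2 q0
    have q4 : c₂ * (2*(b₁/(1-α))) * ε ≤ c₂ * (2*(b₁/(1-α))) * ε ^ (1-α) :=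
      mul_le_mul_of_nonneg_left hεE (by positivity)
    have q5 := mul_le_mul_of_nonneg_left hcoef
      (by positivity : (0:ℝ) ≤ c₂ * ε ^ (1-α))
    have e1 : ε * (c₂ * (a₁ * ε ^ (-α) + b₁/(1-α) + 2 * b₁ * ε ^ (1-α)
          + b₁/(1-α) * ε ^ (1-α)))
        = c₂ * a₁ * (ε * ε ^ (-α)) + c₂ * (b₁/(1-α)) * ε + c₂ * (2*b₁) * (ε * ε ^ (1-α))
          + c₂ * (b₁/(1-α)) * (ε * ε ^ (1-α)) := by ring
    have e2 : 2 * c₂ * ε * (a₁/α * ε ^ (-α) + b₁/(1-α))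
        = c₂ * (2*(a₁/α)) * (ε * ε ^ (-α)) + c₂ * (2*(b₁/(1-α))) * ε := by ring
    rw [e1, e2, idD]
    ring_nf at q1 q2 q3 q4 q5 ⊢
    linarith
  refine le_trans (add_le_add hIa hIb) ?_
  rw [hIcalc]
  exact key
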